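/- Let D > 0 and Q = [a,b,c] a binary quadratic form of discriminant D with a > 0, and write p(z) = -(a|z|² + bx + c)/y for z = x+iy ∈ ℍ. Then for z not on the geodesic c_Q, one has -2·𝟙_Q(z)·(arctan(√D/(-p(z))) + π/2) = arctan(√D/|p(z)|) - arccot(-p(z)/√D), where 𝟙_Q is the characteristic function of the bounded component of ℍ \ c_Q. In particular the left-hand side, extended by 0 on c_Q, differs from the real-analytic function -arccot(-p(z)/√D) by the continuous function arctan(√D/|p(z)|) = arcsin(√(D/(D + p(z)²))). -/

import Mathlib

open Real Complex

/-- `p(z) = -(a|z|² + bx + c)/y` for `z = x + iy` in the upper half-plane. -/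
noncomputable def pQ (a b c : ℤ) (z : ℂ) : ℝ :=
  -((a : ℝ) * Complex.normSq z + b * z.re + c) / z.im

/-- `arccot` with values in `(0, π)`, real analytic on all of `ℝ`. -/
noncomputable def arccot (x : ℝ) : ℝ := π / 2 - Real.arctan x

/-- For a form `[a,b,c]` of discriminant `D > 0` with `a > 0` and `z` off the geodesic
(`p(z) ≠ 0`), writing `𝟙_Q(z) = 1` iff `p(z) > 0` (the bounded component):
`-2 𝟙_Q(z)(arctan(√D/(-p)) + π/2) = arctan(√D/|p|) - arccot(-p/√D)`, and
`arctan(√D/|p|) = arcsin(√(D/(D+p²)))`. -/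
theorem jump_decomposition (a b c : ℤ) (ha : 0 < a) (hD : 0 < b ^ 2 - 4 * a * c)
    (z : ℂ) (hz : 0 < z.im) (hp : pQ a b c z ≠ 0) :
    (-2 : ℝ) * (if 0 < pQ a b c z then 1 else 0) *
        (Real.arctan (Real.sqrt ((b : ℝ) ^ 2 - 4 * a * c) / (-(pQ a b c z))) + π / 2)
      = Real.arctan (Real.sqrt ((b : ℝ) ^ 2 - 4 * a * c) / |pQ a b c z|)
        - arccot (-(pQ a b c z) / Real.sqrt ((b : ℝ) ^ 2 - 4 * a * c))
    ∧ Real.arctan (Real.sqrt ((b : ℝ) ^ 2 - 4 * a * c) / |pQ a b c z|)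
      = Real.arcsin (Real.sqrt (((b : ℝ) ^ 2 - 4 * a * c) /
          (((b : ℝ) ^ 2 - 4 * a * c) + (pQ a b c z) ^ 2))) := by
  have hDpos : (0:ℝ) < (b : ℝ) ^ 2 - 4 * a * c := by exact_mod_cast hD
  set p := pQ a b c z with hpdef
  set s := Real.sqrt ((b : ℝ) ^ 2 - 4 * a * c) with hsdef
  have hs : 0 < s := Real.sqrt_pos.mpr hDpos
  have hs2 : s ^ 2 = (b : ℝ) ^ 2 - 4 * a * c := Real.sq_sqrt hDpos.le
  constructor
  · rcases lt_or_gt_of_ne hp with hneg | hpos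
    · rw [if_neg (not_lt.mpr hneg.le), abs_of_neg hneg]
      have hx : 0 < -p / s := div_pos (neg_pos.mpr hneg) hs
      have h1 : Real.arctan ((-p / s)⁻¹) = π / 2 - Real.arctan (-p / s) :=
        Real.arctan_inv_of_pos hx
      rw [inv_div] at h1
      unfold arccot
      rw [h1]; ring
    · rw [if_pos hpos, abs_of_pos hpos]
      have hx : 0 < s / p := div_pos hs hpos
      have h1 : Real.arctan ((s / p)⁻¹) = π / 2 - Real.arctan (s / p) :=
        Real.arctan_inv_of_pos hx
      rw [inv_div] at h1
      have h2 : s / -p = -(s / p) := by ring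
      have h3 : -p / s = -(p / s) := by ring
      unfold arccot
      rw [h2, h3, Real.arctan_neg, Real.arctan_neg, h1]; ring
  · have hap : 0 < |p| := abs_pos.mpr hp
    rw [Real.arctan_eq_arcsin]
    congr 1
    have h1 : (1 : ℝ) + (s / |p|) ^ 2 = (p ^ 2 + s ^ 2) / p ^ 2 := by
      field_simp [_root_.sq_abs]
      rw [_root_.sq_abs]; ring
    have h2 : (b:ℝ) ^ 2 - 4 * a * c + p ^ 2 = p ^ 2 + s ^ 2 := by rw [hs2]; ring
    have hq : (0:ℝ) < Real.sqrt (p ^ 2 + s ^ 2) := Real.sqrt_pos.mpr (by positivity)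
    rw [h1, Real.sqrt_div (by positivity : (0:ℝ) ≤ p ^ 2 + s ^ 2), Real.sqrt_sq_eq_abs,
      h2, Real.sqrt_div hDpos.le, ← hsdef]
    field_simp
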